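/- In the autoregressive Ising broadcast process with context depth w on T(d,h), for all indices i < j < k the block sums satisfy 0 ≤ E[Z_i Z_j² Z_k] ≤ α²·(α·q_w)^{(k−j)+(j−i)−2}·(dρ)^{2w}·M_{d,ρ,w}(2). -/

import Mathlib

open Finset

noncomputable section

/-- A configuration of the rooted `d`-ary tree of height `h` with values in `S`:
a vertex at level `ℓ ≤ h` is a path from the root, i.e. a function `Fin ℓ → Fin d`,
and the configuration assigns an element of `S` to every vertex. -/
abbrev TreeConfig (d h : ℕ) (S : Type) := ∀ ℓ : Fin (h + 1), (Fin ℓ.val → Fin d) → S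

/-- The value at the root of the tree. -/
def rootOf {d h : ℕ} {S : Type} (σ : TreeConfig d h S) : S :=
  σ ⟨0, Nat.succ_pos h⟩ Fin.elim0

/-- The values at the leaves (level `h`) of the tree, read as a function on root-to-leaf paths. -/
def leavesOf {d h : ℕ} {S : Type} (σ : TreeConfig d h S) : (Fin h → Fin d) → S :=
  σ ⟨h, Nat.lt_succ_self h⟩

/-- Product over all edges of the tree of an edge weight `W (parent value) (child value)`. -/
def edgeProd {S : Type} (d h : ℕ) (W : S → S → ℝ) (σ : TreeConfig d h S) : ℝ :=
  ∏ ℓ : Fin h, ∏ f : Fin (ℓ.val + 1) → Fin d,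
    W (σ ⟨ℓ.val, Nat.lt_succ_of_lt ℓ.isLt⟩ fun i => f i.castSucc)
      (σ ⟨ℓ.val + 1, Nat.succ_lt_succ ℓ.isLt⟩ f)

/-- Probability of a full configuration under the broadcast process with root prior `ν`
and broadcast channel `W`. -/
def broadcastW {S : Type} (d h : ℕ) (ν : S → ℝ) (W : S → S → ℝ) (σ : TreeConfig d h S) : ℝ :=
  ν (rootOf σ) * edgeProd d h W σ

/-- The real spin value `±1` of a Boolean spin. -/
def spinVal (b : Bool) : ℝ := if b then 1 else -1

/-- The Ising broadcast channel: copy the parent spin with probability `(1+ρ)/2`. -/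
def isingEdge (ρ : ℝ) (a b : Bool) : ℝ := if a = b then (1 + ρ) / 2 else (1 - ρ) / 2

/-- Probability of a configuration under the Ising broadcast process with uniform root. -/
def isingW (d h : ℕ) (ρ : ℝ) (σ : TreeConfig d h Bool) : ℝ :=
  broadcastW d h (fun _ => (1 : ℝ) / 2) (isingEdge ρ) σ

/-- Probability of a configuration under the Ising broadcast process with the root
conditioned to equal `r`. -/
def isingWRooted (d h : ℕ) (ρ : ℝ) (r : Bool) (σ : TreeConfig d h Bool) : ℝ :=
  (if rootOf σ = r then 1 else 0) * edgeProd d h (isingEdge ρ) σ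

/-- The sum of the `d^h` leaf spins of a configuration. -/
def leafSum (d h : ℕ) (σ : TreeConfig d h Bool) : ℝ :=
  ∑ f : Fin h → Fin d, spinVal (leavesOf σ f)

/-- Expectation of a function of the configuration under the Ising broadcast process. -/
def isingExp (d h : ℕ) (ρ : ℝ) (g : TreeConfig d h Bool → ℝ) : ℝ :=
  ∑ σ : TreeConfig d h Bool, isingW d h ρ σ * g σ

/-- `M_{d,ρ,h}(k) = E[(Σ_ℓ X_ℓ)^k | X_root = +1]`. -/
def isingMoment (d h : ℕ) (ρ : ℝ) (k : ℕ) : ℝ :=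
  ∑ σ : TreeConfig d h Bool, isingWRooted d h ρ true σ * leafSum d h σ ^ k

/-- Variance of the sum of the leaf spins under the (true) Ising broadcast process. -/
def isingVar (d h : ℕ) (ρ : ℝ) : ℝ :=
  isingExp d h ρ (fun σ => leafSum d h σ ^ 2) - isingExp d h ρ (leafSum d h) ^ 2

/-- Marginal probability of a leaf spin assignment under the Ising broadcast process. -/
def leafW (d w : ℕ) (ρ : ℝ) (y : (Fin w → Fin d) → Bool) : ℝ :=
  ∑ σ : TreeConfig d w Bool, if leavesOf σ = y then isingW d w ρ σ else 0

/-- Marginal probability of a leaf spin assignment given the root equals `r`. -/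
def leafWRooted (d w : ℕ) (ρ : ℝ) (r : Bool) (y : (Fin w → Fin d) → Bool) : ℝ :=
  ∑ σ : TreeConfig d w Bool, if leavesOf σ = y then isingWRooted d w ρ r σ else 0

/-- Posterior mean `E[X_root | X_leaves = y]` of the root spin given the leaves. -/
def rootPostMean (d w : ℕ) (ρ : ℝ) (y : (Fin w → Fin d) → Bool) : ℝ :=
  (∑ σ : TreeConfig d w Bool,
      if leavesOf σ = y then isingW d w ρ σ * spinVal (rootOf σ) else 0) / leafW d w ρ y

/-- `q_w = E[E[X_root | X_leaves]^2]` for the Ising broadcast process on `T(d,w)`. -/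
def qIsing (d w : ℕ) (ρ : ℝ) : ℝ :=
  ∑ y : (Fin w → Fin d) → Bool, leafW d w ρ y * rootPostMean d w ρ y ^ 2

/-- The law `D_m` of the height of the least common ancestor of a uniformly random
adjacent pair of depth-`w` subtrees: `P(D_m = s) = (d-1) d^{m-s} / (d^m - 1)` for `1 ≤ s ≤ m`. -/
def lcaLaw (d m : ℕ) (s : ℕ) : ℝ :=
  if 1 ≤ s ∧ s ≤ m then ((d : ℝ) - 1) * (d : ℝ) ^ (m - s) / ((d : ℝ) ^ m - 1) else 0

/-- `α = E_{s ∼ D_m}[ρ^{2s}]`. -/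
def alphaAR (d m : ℕ) (ρ : ℝ) : ℝ := ∑ s ∈ Finset.Icc 1 m, lcaLaw d m s * ρ ^ (2 * s)

/-- Joint law of the two subtree root spins when their least common ancestor is at
height `s` above them: a pair of uniform `±1` spins with correlation `ρ^{2s}`. -/
def pairRootW (ρ : ℝ) (s : ℕ) (r r' : Bool) : ℝ :=
  (1 + spinVal r * spinVal r' * ρ ^ (2 * s)) / 4

/-- One-step transition of the autoregressive Ising broadcast process: the conditional law
of the next block of `d^w` leaves given that the previous block equals `y`, averaged over a
least common ancestor height `s ∼ D_m`. -/
def arStep (d w m : ℕ) (ρ : ℝ) (y y' : (Fin w → Fin d) → Bool) : ℝ :=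
  ∑ s ∈ Finset.Icc 1 m, lcaLaw d m s *
    ((∑ r : Bool, ∑ r' : Bool,
        pairRootW ρ s r r' * leafWRooted d w ρ r y * leafWRooted d w ρ r' y') / leafW d w ρ y)

/-- Joint probability of the blocks `Y 0, …, Y (n-1)` of the autoregressive Ising
broadcast process with context depth `w`. -/
def arWeight (d w m n : ℕ) (ρ : ℝ) (Y : Fin n → ((Fin w → Fin d) → Bool)) : ℝ :=
  (if hn : 0 < n then leafW d w ρ (Y ⟨0, hn⟩) else 1) *
    ∏ i : Fin (n - 1),
      arStep d w m ρ (Y ⟨i.val, by have := i.isLt; omega⟩)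
        (Y ⟨i.val + 1, by have := i.isLt; omega⟩)

/-- Expectation of a function of the blocks under the autoregressive Ising broadcast process. -/
def arExp (d w m n : ℕ) (ρ : ℝ) (g : (Fin n → ((Fin w → Fin d) → Bool)) → ℝ) : ℝ :=
  ∑ Y : Fin n → ((Fin w → Fin d) → Bool), arWeight d w m n ρ Y * g Y

/-- The block sum `Z_i = Σ_ℓ (Y_i)_ℓ`. -/
def blockSum (d w : ℕ) (y : (Fin w → Fin d) → Bool) : ℝ :=
  ∑ f : Fin w → Fin d, spinVal (y f)

/-- The total sum `Σ_i Z_i` of all `d^h` generated spins. -/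
def arTotal (d w n : ℕ) (Y : Fin n → ((Fin w → Fin d) → Bool)) : ℝ :=
  ∑ i : Fin n, blockSum d w (Y i)

/-- Variance of the total sum of spins generated by the autoregressive Ising broadcast
process with context depth `w` on `T(d,h)`. -/
def arVar (d h w : ℕ) (ρ : ℝ) : ℝ :=
  arExp d w (h - w) (d ^ (h - w)) ρ (fun Y => arTotal d w (d ^ (h - w)) Y ^ 2)
    - arExp d w (h - w) (d ^ (h - w)) ρ (arTotal d w (d ^ (h - w))) ^ 2

/-- Second moment of the total sum of spins of the autoregressive process. -/
def arSecond (d h w : ℕ) (ρ : ℝ) : ℝ :=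
  arExp d w (h - w) (d ^ (h - w)) ρ (fun Y => arTotal d w (d ^ (h - w)) Y ^ 2)

/-- Fourth moment of the total sum of spins of the autoregressive process. -/
def arFourth (d h w : ℕ) (ρ : ℝ) : ℝ :=
  arExp d w (h - w) (d ^ (h - w)) ρ (fun Y => arTotal d w (d ^ (h - w)) Y ^ 4)

/-- `C_{d,ρ}(2) = (1 - 1/d)·dρ²/(dρ² - 1)`. -/
def C2const (d : ℕ) (ρ : ℝ) : ℝ := (1 - 1 / (d : ℝ)) * ((d : ℝ) * ρ ^ 2) / ((d : ℝ) * ρ ^ 2 - 1)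

/-- `α* = Σ_{s ≥ 1} (1 - 1/d)(1/d)^{s-1} ρ^{2s}`. -/
def alphaStar (d : ℕ) (ρ : ℝ) : ℝ :=
  ∑' s : ℕ, (1 - 1 / (d : ℝ)) * (1 / (d : ℝ)) ^ s * ρ ^ (2 * (s + 1))

/-- `A_{d,ρ}(2) = C_{d,ρ}(2) + 2α*/(1 - α* q*)`. -/
def A2const (d : ℕ) (ρ : ℝ) (qstar : ℝ) : ℝ :=
  C2const d ρ + 2 * alphaStar d ρ / (1 - alphaStar d ρ * qstar)

end

noncomputable section
namespace S15

variable {d h : ℕ} {S : Type}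

/-- Extend a height-`h` configuration with a new leaf level. -/
def ext (τ : TreeConfig d h S) (L : (Fin (h+1) → Fin d) → S) : TreeConfig d (h+1) S :=
  fun ℓ => Fin.lastCases (motive := fun ℓ : Fin (h+2) => (Fin ℓ.val → Fin d) → S)
    L (fun j => τ j) ℓ

lemma ext_castSucc (τ : TreeConfig d h S) (L : (Fin (h+1) → Fin d) → S) (j : Fin (h+1)) :
    ext τ L j.castSucc = τ j := by
  simp [ext]

lemma ext_last (τ : TreeConfig d h S) (L : (Fin (h+1) → Fin d) → S) :
    ext τ L (Fin.last (h+1)) = L := by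
  simp [ext]

/-- Peeling the last level of a tree configuration. -/
def treeSucc : TreeConfig d (h+1) S ≃ (TreeConfig d h S × ((Fin (h+1) → Fin d) → S)) where
  toFun σ := (fun j => σ j.castSucc, σ (Fin.last (h+1)))
  invFun p := ext p.1 p.2
  left_inv σ := by
    funext ℓ
    induction ℓ using Fin.lastCases with
    | last => exact ext_last _ _
    | cast j => exact ext_castSucc _ _ j
  right_inv p := by
    refine Prod.ext ?_ ?_
    · funext j; exact ext_castSucc _ _ j
    · exact ext_last _ _

lemma sum_treeConfig_succ [Fintype S] [DecidableEq S] (F : TreeConfig d (h+1) S → ℝ) :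
    ∑ σ : TreeConfig d (h+1) S, F σ
      = ∑ τ : TreeConfig d h S, ∑ L : (Fin (h+1) → Fin d) → S, F (ext τ L) := by
  rw [show (∑ σ : TreeConfig d (h+1) S, F σ)
        = ∑ p : TreeConfig d h S × ((Fin (h+1) → Fin d) → S), F (ext p.1 p.2) from
      (Fintype.sum_equiv treeSucc.symm _ F (fun p => rfl)).symm,
    Fintype.sum_prod_type]

lemma rootOf_ext (τ : TreeConfig d h S) (L : (Fin (h+1) → Fin d) → S) :
    rootOf (ext τ L) = rootOf τ := by
  exact congrFun (ext_castSucc τ L ⟨0, Nat.succ_pos h⟩) Fin.elim0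

lemma leavesOf_ext (τ : TreeConfig d h S) (L : (Fin (h+1) → Fin d) → S) :
    leavesOf (ext τ L) = L := by
  exact ext_last τ L

lemma edgeProd_ext (W : S → S → ℝ) (τ : TreeConfig d h S) (L : (Fin (h+1) → Fin d) → S) :
    edgeProd d (h+1) W (ext τ L)
      = edgeProd d h W τ *
        ∏ f : Fin (h+1) → Fin d, W (leavesOf τ (fun i => f i.castSucc)) (L f) := by
  rw [edgeProd, Fin.prod_univ_castSucc]
  congr 1
  · rw [edgeProd]
    refine Finset.prod_congr rfl fun j _ => Finset.prod_congr rfl fun f _ => ?_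
    exact congrArg₂ W
      (congrFun (ext_castSucc τ L ⟨j.val, Nat.lt_succ_of_lt j.isLt⟩) _)
      (congrFun (ext_castSucc τ L ⟨j.val + 1, Nat.succ_lt_succ j.isLt⟩) f)
  · refine Finset.prod_congr rfl fun f _ => ?_
    exact congrArg₂ W
      (congrFun (ext_castSucc τ L ⟨h, Nat.lt_succ_self h⟩) _)
      (congrFun (ext_last τ L) f)


lemma spin_mul_self (b : Bool) : spinVal b * spinVal b = 1 := by
  cases b <;> norm_num [spinVal]

lemma spin_not (b : Bool) : spinVal (!b) = - spinVal b := by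
  cases b <;> norm_num [spinVal]

lemma spin_abs (b : Bool) : |spinVal b| = 1 := by
  cases b <;> norm_num [spinVal]

lemma sum_isingEdge (ρ : ℝ) (a : Bool) : ∑ b : Bool, isingEdge ρ a b = 1 := by
  cases a <;> simp [isingEdge] <;> ring

lemma sum_isingEdge_spin (ρ : ℝ) (a : Bool) :
    ∑ b : Bool, isingEdge ρ a b * spinVal b = ρ * spinVal a := by
  cases a <;> simp [isingEdge, spinVal] <;> ring

lemma isingEdge_nonneg {ρ : ℝ} (hρ : ρ ∈ Set.Icc (-1 : ℝ) 1) (a b : Bool) :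
    0 ≤ isingEdge ρ a b := by
  obtain ⟨h1, h2⟩ := hρ
  unfold isingEdge; split <;> linarith

lemma edgeProd_nonneg {S : Type} {d h : ℕ} {W : S → S → ℝ} (hW : ∀ a b, 0 ≤ W a b)
    (σ : TreeConfig d h S) : 0 ≤ edgeProd d h W σ :=
  Finset.prod_nonneg fun _ _ => Finset.prod_nonneg fun _ _ => hW _ _

variable {d : ℕ} {S : Type}

def treeZero : TreeConfig d 0 S ≃ S where
  toFun σ := rootOf σ
  invFun r := fun _ _ => r
  left_inv σ := by
    funext ℓ f
    have hℓ : ℓ = ⟨0, Nat.one_pos⟩ := by ext; omega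
    subst hℓ
    have hf : f = Fin.elim0 := funext fun i => i.elim0
    subst hf; rfl
  right_inv r := rfl

lemma sum_treeConfig_zero [Fintype S] [DecidableEq S] (F : TreeConfig d 0 S → ℝ) :
    ∑ σ : TreeConfig d 0 S, F σ = ∑ r : S, F (treeZero.symm r) :=
  Fintype.sum_equiv treeZero F _ (fun σ => by
    congr 1
    exact (treeZero.left_inv σ).symm)

lemma edgeProd_zero (W : S → S → ℝ) (σ : TreeConfig d 0 S) : edgeProd d 0 W σ = 1 := by
  simp [edgeProd]

lemma sum_broadcastW [Fintype S] [DecidableEq S] (h : ℕ) (ν : S → ℝ) (W : S → S → ℝ)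
    (hW : ∀ a, ∑ b : S, W a b = 1) :
    ∑ σ : TreeConfig d h S, broadcastW d h ν W σ = ∑ r : S, ν r := by
  induction h with
  | zero =>
    rw [sum_treeConfig_zero]
    refine Finset.sum_congr rfl fun r _ => ?_
    rw [broadcastW, edgeProd_zero, mul_one]; rfl
  | succ h ih =>
    rw [sum_treeConfig_succ]
    have hin : ∀ τ : TreeConfig d h S,
        (∑ L : (Fin (h+1) → Fin d) → S,
          ∏ f : Fin (h+1) → Fin d, W (leavesOf τ fun i => f i.castSucc) (L f)) = 1 := by
      intro τ
      rw [← Fintype.prod_sum]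
      simp [hW]
    calc ∑ τ : TreeConfig d h S, ∑ L, broadcastW d (h+1) ν W (ext τ L)
        = ∑ τ : TreeConfig d h S, broadcastW d h ν W τ := by
          refine Finset.sum_congr rfl fun τ _ => ?_
          simp only [broadcastW, rootOf_ext, edgeProd_ext, ← mul_assoc]
          rw [← Finset.mul_sum, hin τ, mul_one]
      _ = ∑ r : S, ν r := ih

lemma sum_isingW (h : ℕ) (ρ : ℝ) : ∑ σ : TreeConfig d h Bool, isingW d h ρ σ = 1 := by
  rw [show (fun σ => isingW d h ρ σ) = broadcastW d h (fun _ => (1:ℝ)/2) (isingEdge ρ) from rfl,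
    sum_broadcastW h _ _ (sum_isingEdge ρ)]
  norm_num

lemma sum_isingWRooted (h : ℕ) (ρ : ℝ) (r : Bool) :
    ∑ σ : TreeConfig d h Bool, isingWRooted d h ρ r σ = 1 := by
  rw [show (fun σ => isingWRooted d h ρ r σ)
      = broadcastW d h (fun x => if x = r then (1:ℝ) else 0) (isingEdge ρ) from rfl,
    sum_broadcastW h _ _ (sum_isingEdge ρ)]
  simp

lemma corr (ρ : ℝ) (h : ℕ) (f : Fin h → Fin d) :
    ∑ σ : TreeConfig d h Bool,
        isingW d h ρ σ * spinVal (rootOf σ) * spinVal (leavesOf σ f) = ρ ^ h := by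
  induction h with
  | zero =>
    have h0 : ∀ σ : TreeConfig d 0 Bool, leavesOf σ f = rootOf σ := by
      intro σ
      rw [leavesOf, rootOf]
      congr 1
      exact funext fun i => i.elim0
    calc ∑ σ : TreeConfig d 0 Bool, isingW d 0 ρ σ * spinVal (rootOf σ) * spinVal (leavesOf σ f)
        = ∑ σ : TreeConfig d 0 Bool, isingW d 0 ρ σ := by
          refine Finset.sum_congr rfl fun σ _ => ?_
          rw [h0 σ, mul_assoc, spin_mul_self, mul_one]
      _ = 1 := sum_isingW 0 ρ
      _ = ρ ^ 0 := (pow_zero ρ).symm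
  | succ h ih =>
    rw [sum_treeConfig_succ]
    have key : ∀ τ : TreeConfig d h Bool, ∀ L : (Fin (h+1) → Fin d) → Bool,
        isingW d (h+1) ρ (ext τ L) * spinVal (rootOf (ext τ L)) * spinVal (leavesOf (ext τ L) f)
        = (isingW d h ρ τ * spinVal (rootOf τ) *
            (∏ f' : Fin (h+1) → Fin d, isingEdge ρ (leavesOf τ fun i => f' i.castSucc) (L f'))) *
              spinVal (L f) := by
      intro τ L
      rw [leavesOf_ext]
      simp only [isingW, broadcastW, rootOf_ext, edgeProd_ext]
      ring
    have hin : ∀ τ : TreeConfig d h Bool,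
        (∑ L : (Fin (h+1) → Fin d) → Bool,
          (∏ f' : Fin (h+1) → Fin d, isingEdge ρ (leavesOf τ fun i => f' i.castSucc) (L f')) *
            spinVal (L f))
        = ρ * spinVal (leavesOf τ fun i => f (Fin.castSucc i)) := by
      intro τ
      have e1 : ∀ L : (Fin (h+1) → Fin d) → Bool,
          (∏ f' : Fin (h+1) → Fin d, isingEdge ρ (leavesOf τ fun i => f' i.castSucc) (L f')) *
            spinVal (L f)
          = ∏ f' : Fin (h+1) → Fin d,
              (isingEdge ρ (leavesOf τ fun i => f' i.castSucc) (L f') *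
                (if f' = f then spinVal (L f') else 1)) := by
        intro L
        rw [Finset.prod_mul_distrib, Finset.prod_ite_eq' Finset.univ f (fun f' => spinVal (L f')),
          if_pos (Finset.mem_univ f)]
      simp only [e1]
      rw [← Fintype.prod_sum (fun (f' : Fin (h+1) → Fin d) (b : Bool) =>
        isingEdge ρ (leavesOf τ fun i => f' i.castSucc) b * if f' = f then spinVal b else 1)]
      have e2 : ∀ f' : Fin (h+1) → Fin d,
          (∑ b : Bool, isingEdge ρ (leavesOf τ fun i => f' i.castSucc) b *
              (if f' = f then spinVal b else 1))
          = if f' = f then ρ * spinVal (leavesOf τ fun i => f' i.castSucc) else 1 := by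
        intro f'
        by_cases hf : f' = f
        · simp only [if_pos hf]
          exact sum_isingEdge_spin ρ _
        · simp only [if_neg hf, mul_one]
          exact sum_isingEdge ρ _
      simp only [e2]
      rw [Finset.prod_ite_eq' Finset.univ f
        (fun f' => ρ * spinVal (leavesOf τ fun i => f' i.castSucc)),
        if_pos (Finset.mem_univ f)]
    calc ∑ τ : TreeConfig d h Bool, ∑ L : (Fin (h+1) → Fin d) → Bool,
          isingW d (h+1) ρ (ext τ L) * spinVal (rootOf (ext τ L)) * spinVal (leavesOf (ext τ L) f)
        = ∑ τ : TreeConfig d h Bool, isingW d h ρ τ * spinVal (rootOf τ) *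
            (ρ * spinVal (leavesOf τ fun i => f (Fin.castSucc i))) := by
          refine Finset.sum_congr rfl fun τ _ => ?_
          simp only [key, mul_assoc, ← Finset.mul_sum]
          rw [hin τ]
      _ = ρ * ∑ τ : TreeConfig d h Bool, isingW d h ρ τ * spinVal (rootOf τ) *
            spinVal (leavesOf τ fun i => f (Fin.castSucc i)) := by
          rw [Finset.mul_sum]
          exact Finset.sum_congr rfl fun τ _ => by ring
      _ = ρ ^ (h + 1) := by rw [ih (fun i => f (Fin.castSucc i))]; ring

/-- The type of a block: a spin assignment to the `d^w` leaves. -/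
abbrev Blk (d w : ℕ) := (Fin w → Fin d) → Bool

/-- Numerator of the posterior mean: `E[X_root 1{leaves = y}]`. -/
def gnum (d w : ℕ) (ρ : ℝ) (y : Blk d w) : ℝ :=
  ∑ σ : TreeConfig d w Bool,
    if leavesOf σ = y then isingW d w ρ σ * spinVal (rootOf σ) else 0

lemma rootPostMean_eq (d w : ℕ) (ρ : ℝ) (y : Blk d w) :
    rootPostMean d w ρ y = gnum d w ρ y / leafW d w ρ y := rfl

variable {d w : ℕ} {ρ : ℝ}

lemma sum_leafW_mul (F : Blk d w → ℝ) :
    ∑ y : Blk d w, leafW d w ρ y * F y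
      = ∑ σ : TreeConfig d w Bool, isingW d w ρ σ * F (leavesOf σ) := by
  have : ∀ y : Blk d w, leafW d w ρ y * F y
      = ∑ σ : TreeConfig d w Bool, if leavesOf σ = y then isingW d w ρ σ * F y else 0 := by
    intro y
    rw [leafW, Finset.sum_mul]
    exact Finset.sum_congr rfl fun σ _ => by split <;> simp
  simp only [this]
  rw [Finset.sum_comm]
  refine Finset.sum_congr rfl fun σ _ => ?_
  rw [Finset.sum_ite_eq univ (leavesOf σ) (fun y => isingW d w ρ σ * F y), if_pos (mem_univ _)]

lemma sum_gnum_mul (F : Blk d w → ℝ) :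
    ∑ y : Blk d w, gnum d w ρ y * F y
      = ∑ σ : TreeConfig d w Bool,
          isingW d w ρ σ * spinVal (rootOf σ) * F (leavesOf σ) := by
  have : ∀ y : Blk d w, gnum d w ρ y * F y
      = ∑ σ : TreeConfig d w Bool,
          if leavesOf σ = y then isingW d w ρ σ * spinVal (rootOf σ) * F y else 0 := by
    intro y
    rw [gnum, Finset.sum_mul]
    exact Finset.sum_congr rfl fun σ _ => by split <;> simp
  simp only [this]
  rw [Finset.sum_comm]
  refine Finset.sum_congr rfl fun σ _ => ?_
  rw [Finset.sum_ite_eq univ (leavesOf σ)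
    (fun y => isingW d w ρ σ * spinVal (rootOf σ) * F y), if_pos (mem_univ _)]

lemma isingW_eq_half_edge (σ : TreeConfig d w Bool) :
    isingW d w ρ σ = 1 / 2 * edgeProd d w (isingEdge ρ) σ := rfl

lemma rooted_add (y : Blk d w) :
    leafWRooted d w ρ true y + leafWRooted d w ρ false y = 2 * leafW d w ρ y := by
  rw [leafWRooted, leafWRooted, leafW, ← Finset.sum_add_distrib, Finset.mul_sum]
  refine Finset.sum_congr rfl fun σ _ => ?_
  split
  · rw [isingWRooted, isingWRooted, isingW_eq_half_edge]
    cases hr : rootOf σ <;> simp [hr] <;> ring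
  · simp

lemma rooted_sub (y : Blk d w) :
    leafWRooted d w ρ true y - leafWRooted d w ρ false y = 2 * gnum d w ρ y := by
  rw [leafWRooted, leafWRooted, gnum, ← Finset.sum_sub_distrib, Finset.mul_sum]
  refine Finset.sum_congr rfl fun σ _ => ?_
  split
  · rw [isingWRooted, isingWRooted, isingW_eq_half_edge]
    cases hr : rootOf σ <;> simp [hr, spinVal] <;> ring
  · simp

section nonneg
variable (hρ : ρ ∈ Set.Icc (-1 : ℝ) 1)
include hρ

lemma isingW_nonneg (σ : TreeConfig d w Bool) : 0 ≤ isingW d w ρ σ := by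
  rw [isingW_eq_half_edge]
  have := edgeProd_nonneg (S := Bool) (d := d) (h := w) (isingEdge_nonneg hρ) σ
  linarith

lemma isingWRooted_nonneg (r : Bool) (σ : TreeConfig d w Bool) :
    0 ≤ isingWRooted d w ρ r σ := by
  rw [isingWRooted]
  have := edgeProd_nonneg (S := Bool) (d := d) (h := w) (isingEdge_nonneg hρ) σ
  split <;> simp [this]

lemma leafW_nonneg (y : Blk d w) : 0 ≤ leafW d w ρ y :=
  Finset.sum_nonneg fun σ _ => by
    split
    · exact isingW_nonneg hρ σ
    · exact le_refl 0

lemma leafWRooted_nonneg (r : Bool) (y : Blk d w) : 0 ≤ leafWRooted d w ρ r y :=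
  Finset.sum_nonneg fun σ _ => by
    split
    · exact isingWRooted_nonneg hρ r σ
    · exact le_refl 0

lemma abs_gnum_le (y : Blk d w) : |gnum d w ρ y| ≤ leafW d w ρ y := by
  rw [gnum, leafW]
  refine (Finset.abs_sum_le_sum_abs _ _).trans (Finset.sum_le_sum fun σ _ => ?_)
  split
  · rw [abs_mul, spin_abs, mul_one]
    exact le_of_eq (abs_of_nonneg (isingW_nonneg hρ σ))
  · simp

lemma gnum_eq_zero_of_leafW {y : Blk d w} (h0 : leafW d w ρ y = 0) : gnum d w ρ y = 0 := by
  have := abs_gnum_le hρ (y := y)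
  rw [h0] at this
  exact abs_eq_zero.mp (le_antisymm this (abs_nonneg _))

lemma leafW_mul_postMean (y : Blk d w) :
    leafW d w ρ y * rootPostMean d w ρ y = gnum d w ρ y := by
  rw [rootPostMean_eq]
  by_cases h0 : leafW d w ρ y = 0
  · rw [h0, zero_mul, gnum_eq_zero_of_leafW hρ h0]
  · field_simp

lemma postMean_sq_le_one (y : Blk d w) : rootPostMean d w ρ y ^ 2 ≤ 1 := by
  rw [rootPostMean_eq]
  by_cases h0 : leafW d w ρ y = 0
  · rw [h0, div_zero]; norm_num
  · rw [div_pow, div_le_one (by positivity)]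
    have h1 := abs_gnum_le hρ (y := y)
    nlinarith [abs_nonneg (gnum d w ρ y), sq_abs (gnum d w ρ y)]

end nonneg


/-! ### Flip symmetry -/

def flipC {d w : ℕ} (σ : TreeConfig d w Bool) : TreeConfig d w Bool := fun ℓ f => !(σ ℓ f)

def flipB {d w : ℕ} (y : Blk d w) : Blk d w := fun f => !(y f)

variable {d w : ℕ} {ρ : ℝ}

lemma flipC_invol : Function.Involutive (flipC (d := d) (w := w)) := by
  intro σ; funext ℓ f; simp [flipC]

lemma flipB_invol : Function.Involutive (flipB (d := d) (w := w)) := by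
  intro y; funext f; simp [flipB]

lemma sum_flipC (F : TreeConfig d w Bool → ℝ) :
    ∑ σ : TreeConfig d w Bool, F (flipC σ) = ∑ σ : TreeConfig d w Bool, F σ :=
  Fintype.sum_equiv (Function.Involutive.toPerm _ flipC_invol) _ F (fun _ => rfl)

lemma sum_flipB (F : Blk d w → ℝ) :
    ∑ y : Blk d w, F (flipB y) = ∑ y : Blk d w, F y :=
  Fintype.sum_equiv (Function.Involutive.toPerm _ flipB_invol) _ F (fun _ => rfl)

lemma sum_eq_zero_of_flipC_neg {F : TreeConfig d w Bool → ℝ} (hF : ∀ σ, F (flipC σ) = -F σ) :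
    ∑ σ : TreeConfig d w Bool, F σ = 0 := by
  have h := sum_flipC F
  simp only [hF] at h
  rw [Finset.sum_neg_distrib] at h
  linarith

lemma sum_eq_zero_of_flipB_neg {F : Blk d w → ℝ} (hF : ∀ y, F (flipB y) = -F y) :
    ∑ y : Blk d w, F y = 0 := by
  have h := sum_flipB F
  simp only [hF] at h
  rw [Finset.sum_neg_distrib] at h
  linarith

lemma rootOf_flipC (σ : TreeConfig d w Bool) : rootOf (flipC σ) = !(rootOf σ) := rfl

lemma leavesOf_flipC (σ : TreeConfig d w Bool) : leavesOf (flipC σ) = flipB (leavesOf σ) := rfl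

lemma edgeProd_flipC (σ : TreeConfig d w Bool) :
    edgeProd d w (isingEdge ρ) (flipC σ) = edgeProd d w (isingEdge ρ) σ := by
  rw [edgeProd, edgeProd]
  refine Finset.prod_congr rfl fun ℓ _ => Finset.prod_congr rfl fun f _ => ?_
  show isingEdge ρ (!(σ _ _)) (!(σ _ _)) = _
  rw [isingEdge, isingEdge]
  cases σ ⟨ℓ.val, Nat.lt_succ_of_lt ℓ.isLt⟩ fun i => f i.castSucc <;>
    cases σ ⟨ℓ.val + 1, Nat.succ_lt_succ ℓ.isLt⟩ f <;> simp

lemma isingW_flipC (σ : TreeConfig d w Bool) : isingW d w ρ (flipC σ) = isingW d w ρ σ := by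
  rw [isingW_eq_half_edge, isingW_eq_half_edge, edgeProd_flipC]

lemma leafSum_flipC (σ : TreeConfig d w Bool) : leafSum d w (flipC σ) = -leafSum d w σ := by
  rw [leafSum, leafSum, ← Finset.sum_neg_distrib]
  exact Finset.sum_congr rfl fun f _ => spin_not _

lemma blockSum_flipB (y : Blk d w) : blockSum d w (flipB y) = -blockSum d w y := by
  rw [blockSum, blockSum, ← Finset.sum_neg_distrib]
  exact Finset.sum_congr rfl fun f _ => spin_not _

lemma leavesOf_eq_flipB_iff (σ : TreeConfig d w Bool) (y : Blk d w) :
    (leavesOf (flipC σ) = flipB y) ↔ (leavesOf σ = y) := by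
  rw [leavesOf_flipC]
  exact ⟨fun hh => flipB_invol.injective hh, fun hh => by rw [hh]⟩

lemma leafW_flipB (y : Blk d w) : leafW d w ρ (flipB y) = leafW d w ρ y := by
  rw [leafW, leafW, ← sum_flipC (fun σ => if leavesOf σ = flipB y then isingW d w ρ σ else 0)]
  refine Finset.sum_congr rfl fun σ _ => ?_
  rw [isingW_flipC]
  congr 1
  rw [eq_iff_iff]
  exact leavesOf_eq_flipB_iff σ y

lemma gnum_flipB (y : Blk d w) : gnum d w ρ (flipB y) = -gnum d w ρ y := by
  rw [gnum, gnum, ← Finset.sum_neg_distrib,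
    ← sum_flipC (fun σ => if leavesOf σ = flipB y then isingW d w ρ σ * spinVal (rootOf σ) else 0)]
  refine Finset.sum_congr rfl fun σ _ => ?_
  by_cases hy : leavesOf σ = y
  · rw [if_pos ((leavesOf_eq_flipB_iff σ y).mpr hy), if_pos hy, isingW_flipC, rootOf_flipC,
      spin_not]
    ring
  · rw [if_neg (fun hc => hy ((leavesOf_eq_flipB_iff σ y).mp hc)), if_neg hy, neg_zero]

lemma postMean_flipB (y : Blk d w) :
    rootPostMean d w ρ (flipB y) = -rootPostMean d w ρ y := by
  rw [rootPostMean_eq, rootPostMean_eq, gnum_flipB, leafW_flipB, neg_div]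

/-! ### Scalar sums -/

lemma sum_leafW : ∑ y : Blk d w, leafW d w ρ y = 1 := by
  have := sum_leafW_mul (d := d) (w := w) (ρ := ρ) (fun _ => 1)
  simpa using this.trans (by simpa using sum_isingW (d := d) w ρ)

lemma isingWRooted_flipC (r : Bool) (σ : TreeConfig d w Bool) :
    isingWRooted d w ρ r (flipC σ) = isingWRooted d w ρ (!r) σ := by
  rw [isingWRooted, isingWRooted, rootOf_flipC, edgeProd_flipC]
  congr 1
  cases rootOf σ <;> cases r <;> simp

lemma sum_gnum : ∑ y : Blk d w, gnum d w ρ y = 0 := by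
  have h : ∑ y : Blk d w, gnum d w ρ y = ∑ y : Blk d w, gnum d w ρ y * 1 := by simp
  rw [h, sum_gnum_mul]
  exact sum_eq_zero_of_flipC_neg (fun σ => by
    rw [isingW_flipC, rootOf_flipC, spin_not]; ring)

lemma sum_leafW_blockSum : ∑ y : Blk d w, leafW d w ρ y * blockSum d w y = 0 := by
  rw [sum_leafW_mul]
  exact sum_eq_zero_of_flipC_neg (fun σ => by
    show isingW d w ρ (flipC σ) * blockSum d w (leavesOf (flipC σ)) = _
    rw [isingW_flipC, leavesOf_flipC, blockSum_flipB]; ring)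

lemma sum_gnum_blockSum_sq :
    ∑ y : Blk d w, gnum d w ρ y * blockSum d w y ^ 2 = 0 := by
  rw [sum_gnum_mul]
  exact sum_eq_zero_of_flipC_neg (fun σ => by
    show isingW d w ρ (flipC σ) * spinVal (rootOf (flipC σ))
        * blockSum d w (leavesOf (flipC σ)) ^ 2 = _
    rw [isingW_flipC, leavesOf_flipC, blockSum_flipB, rootOf_flipC, spin_not]; ring)

lemma sum_gnum_blockSum : ∑ y : Blk d w, gnum d w ρ y * blockSum d w y = ((d : ℝ) * ρ) ^ w := by
  rw [sum_gnum_mul]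
  have hb : ∀ σ : TreeConfig d w Bool, blockSum d w (leavesOf σ) = leafSum d w σ := fun _ => rfl
  simp only [hb]
  have : ∀ σ : TreeConfig d w Bool,
      isingW d w ρ σ * spinVal (rootOf σ) * leafSum d w σ
      = ∑ f : Fin w → Fin d,
          isingW d w ρ σ * spinVal (rootOf σ) * spinVal (leavesOf σ f) := by
    intro σ; rw [leafSum, Finset.mul_sum]
  simp only [this]
  rw [Finset.sum_comm]
  have : ∀ f : Fin w → Fin d, ∑ σ : TreeConfig d w Bool,
      isingW d w ρ σ * spinVal (rootOf σ) * spinVal (leavesOf σ f) = ρ ^ w :=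
    fun f => corr ρ w f
  simp only [this]
  rw [Finset.sum_const, Finset.card_univ, nsmul_eq_mul, mul_pow]
  congr 1
  rw [Fintype.card_fun, Fintype.card_fin, Fintype.card_fin, Nat.cast_pow]

lemma sum_leafW_blockSum_sq :
    ∑ y : Blk d w, leafW d w ρ y * blockSum d w y ^ 2 = isingMoment d w ρ 2 := by
  rw [sum_leafW_mul]
  have hb : ∀ σ : TreeConfig d w Bool, blockSum d w (leavesOf σ) = leafSum d w σ := fun _ => rfl
  have key : ∀ σ : TreeConfig d w Bool, isingW d w ρ σ * leafSum d w σ ^ 2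
      = 1/2 * (isingWRooted d w ρ true σ * leafSum d w σ ^ 2
          + isingWRooted d w ρ false σ * leafSum d w σ ^ 2) := by
    intro σ
    rw [isingWRooted, isingWRooted, isingW_eq_half_edge]
    cases hr : rootOf σ <;> simp [hr] <;> ring
  simp only [hb, key]
  rw [← Finset.mul_sum, Finset.sum_add_distrib]
  have hf : ∑ σ : TreeConfig d w Bool, isingWRooted d w ρ false σ * leafSum d w σ ^ 2
      = ∑ σ : TreeConfig d w Bool, isingWRooted d w ρ true σ * leafSum d w σ ^ 2 := by
    rw [← sum_flipC (fun σ => isingWRooted d w ρ false σ * leafSum d w σ ^ 2)]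
    refine Finset.sum_congr rfl fun σ _ => ?_
    rw [isingWRooted_flipC, leafSum_flipC]
    simp only [Bool.not_false]
    ring
  rw [hf, isingMoment]
  ring

/-! ### The lca law and the key one-step identity -/

lemma geom_sum (d : ℕ) : ∀ m : ℕ,
    ∑ s ∈ Finset.Icc 1 m, ((d : ℝ) - 1) * (d : ℝ) ^ (m - s) = (d : ℝ) ^ m - 1 := by
  intro m
  induction m with
  | zero => simp
  | succ m ih =>
    rw [← Finset.insert_Icc_right_eq_Icc_add_one (by omega : 1 ≤ m + 1), Finset.sum_insert (by simp)]
    have : ∀ s ∈ Finset.Icc 1 m, ((d : ℝ) - 1) * (d : ℝ) ^ (m + 1 - s)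
        = (d : ℝ) * (((d : ℝ) - 1) * (d : ℝ) ^ (m - s)) := by
      intro s hs
      rw [Finset.mem_Icc] at hs
      rw [show m + 1 - s = (m - s) + 1 by omega, pow_succ]
      ring
    rw [Finset.sum_congr rfl this, ← Finset.mul_sum, ih]
    simp
    ring

lemma one_lt_pow_cast {d m : ℕ} (hd : 2 ≤ d) (hm : 1 ≤ m) : (1 : ℝ) < (d : ℝ) ^ m := by
  have h2 : (2 : ℝ) ≤ (d : ℝ) := by exact_mod_cast hd
  calc (1 : ℝ) < 2 ^ m := by
        apply one_lt_pow₀ (by norm_num) (by omega)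
    _ ≤ (d : ℝ) ^ m := by
        apply pow_le_pow_left₀ (by norm_num) h2

lemma sum_lcaLaw {d m : ℕ} (hd : 2 ≤ d) (hm : 1 ≤ m) :
    ∑ s ∈ Finset.Icc 1 m, lcaLaw d m s = 1 := by
  have hne : (d : ℝ) ^ m - 1 ≠ 0 := by
    have := one_lt_pow_cast hd hm; linarith
  have : ∀ s ∈ Finset.Icc 1 m, lcaLaw d m s
      = ((d : ℝ) - 1) * (d : ℝ) ^ (m - s) / ((d : ℝ) ^ m - 1) := by
    intro s hs
    rw [Finset.mem_Icc] at hs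
    rw [lcaLaw, if_pos hs]
  rw [Finset.sum_congr rfl this, ← Finset.sum_div, geom_sum, div_self hne]

lemma lcaLaw_nonneg {d m : ℕ} (hd : 2 ≤ d) (s : ℕ) : 0 ≤ lcaLaw d m s := by
  rw [lcaLaw]
  split
  · rename_i hs
    have hd1 : (1 : ℝ) ≤ (d : ℝ) := by
      have : (2 : ℝ) ≤ (d : ℝ) := by exact_mod_cast hd
      linarith
    have := one_lt_pow_cast hd (by omega : 1 ≤ m)
    have hp : (0:ℝ) ≤ (d : ℝ) ^ (m - s) := by positivity
    apply div_nonneg (by nlinarith) (by linarith)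
  · exact le_refl 0

lemma alphaAR_nonneg {d m : ℕ} {ρ : ℝ} (hd : 2 ≤ d) : 0 ≤ alphaAR d m ρ :=
  Finset.sum_nonneg fun s _ => mul_nonneg (lcaLaw_nonneg hd s)
    (by rw [pow_mul]; positivity)

variable {d w m : ℕ} {ρ : ℝ}

lemma pair_sum (s : ℕ) (y y' : Blk d w) :
    (∑ r : Bool, ∑ r' : Bool,
        pairRootW ρ s r r' * leafWRooted d w ρ r y * leafWRooted d w ρ r' y')
      = leafW d w ρ y * leafW d w ρ y'
        + ρ ^ (2 * s) * gnum d w ρ y * gnum d w ρ y' := by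
  have e1 : leafW d w ρ y
      = (leafWRooted d w ρ true y + leafWRooted d w ρ false y) / 2 := by
    linarith [rooted_add (ρ := ρ) y]
  have e2 : gnum d w ρ y
      = (leafWRooted d w ρ true y - leafWRooted d w ρ false y) / 2 := by
    linarith [rooted_sub (ρ := ρ) y]
  have e3 : leafW d w ρ y'
      = (leafWRooted d w ρ true y' + leafWRooted d w ρ false y') / 2 := by
    linarith [rooted_add (ρ := ρ) y']
  have e4 : gnum d w ρ y'
      = (leafWRooted d w ρ true y' - leafWRooted d w ρ false y') / 2 := by
    linarith [rooted_sub (ρ := ρ) y']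
  rw [e1, e2, e3, e4]
  simp only [Fintype.sum_bool, pairRootW, spinVal, if_true, Bool.false_eq_true, if_false]
  ring

lemma key_step (hd : 2 ≤ d) (hm : 1 ≤ m) (hρ : ρ ∈ Set.Icc (-1 : ℝ) 1) (y y' : Blk d w) :
    leafW d w ρ y * arStep d w m ρ y y'
      = leafW d w ρ y * leafW d w ρ y'
        + alphaAR d m ρ * gnum d w ρ y * gnum d w ρ y' := by
  rw [arStep]
  by_cases h0 : leafW d w ρ y = 0
  · have hg : gnum d w ρ y = 0 := gnum_eq_zero_of_leafW hρ h0
    simp [h0, hg]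
  · rw [Finset.mul_sum]
    have step1 : ∀ s ∈ Finset.Icc 1 m,
        leafW d w ρ y * (lcaLaw d m s *
          ((∑ r : Bool, ∑ r' : Bool,
              pairRootW ρ s r r' * leafWRooted d w ρ r y * leafWRooted d w ρ r' y')
            / leafW d w ρ y))
        = lcaLaw d m s * (leafW d w ρ y * leafW d w ρ y')
          + (lcaLaw d m s * ρ ^ (2 * s)) * (gnum d w ρ y * gnum d w ρ y') := by
      intro s _
      rw [pair_sum]
      field_simp
    rw [Finset.sum_congr rfl step1, Finset.sum_add_distrib, ← Finset.sum_mul, ← Finset.sum_mul,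
      sum_lcaLaw hd hm, one_mul, alphaAR]
    ring

/-! ### Transfer operator machinery -/

def transIter (d w m : ℕ) (ρ : ℝ) : ℕ → (Blk d w → ℝ) → (ℕ → Blk d w → ℝ) → ℝ
  | 0, μ, φ => ∑ y : Blk d w, μ y * φ 0 y
  | (n+1), μ, φ =>
      transIter d w m ρ n
        (fun y' => ∑ y : Blk d w, μ y * φ 0 y * arStep d w m ρ y y')
        (fun i => φ (i+1))

lemma chain_eq (n : ℕ) (μ : Blk d w → ℝ) (φ : ℕ → Blk d w → ℝ) :
    ∑ Y : Fin (n+1) → Blk d w,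
      (μ (Y 0) * ∏ i : Fin n, arStep d w m ρ (Y i.castSucc) (Y i.succ)) *
        ∏ i : Fin (n+1), φ i.val (Y i)
    = transIter d w m ρ n μ φ := by
  induction n generalizing μ φ with
  | zero =>
    rw [transIter]
    exact Fintype.sum_equiv (Equiv.funUnique (Fin 1) (Blk d w)) _
      (fun y => μ y * φ 0 y) (fun Y => by simp)
  | succ n ih =>
    rw [transIter, ← ih]
    set bigF : (Fin (n+2) → Blk d w) → ℝ := fun Y =>
      (μ (Y 0) * ∏ i : Fin (n+1), arStep d w m ρ (Y i.castSucc) (Y i.succ)) *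
        ∏ i : Fin (n+2), φ i.val (Y i) with hbigF
    have hre := Fintype.sum_equiv (Fin.consEquiv fun _ : Fin (n+2) => Blk d w).symm
      bigF
      (fun p => bigF (Fin.cons p.1 p.2 : Fin (n+2) → Blk d w))
      (fun Y => congrArg bigF (Fin.cons_self_tail Y).symm)
    rw [show (∑ Y : Fin (n+2) → Blk d w, bigF Y)
        = ∑ Y : Fin (n+2) → Blk d w, bigF Y from rfl, hre, Fintype.sum_prod_type,
      Finset.sum_comm]
    refine Finset.sum_congr rfl fun Y' _ => ?_
    have hterm : ∀ y0 : Blk d w,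
        bigF (Fin.cons y0 Y' : Fin (n+2) → Blk d w)
        = (μ y0 * φ 0 y0 * arStep d w m ρ y0 (Y' 0)) *
            ((∏ i : Fin n, arStep d w m ρ (Y' i.castSucc) (Y' i.succ)) *
              ∏ i : Fin (n+1), φ (i.val + 1) (Y' i)) := by
      intro y0
      rw [hbigF]
      simp only []
      rw [Fin.prod_univ_succ (fun i : Fin (n+1) =>
        arStep d w m ρ ((Fin.cons y0 Y' : Fin (n+2) → Blk d w) i.castSucc)
          ((Fin.cons y0 Y' : Fin (n+2) → Blk d w) i.succ))]
      rw [Fin.prod_univ_succ (fun i : Fin (n+2) =>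
        φ i.val ((Fin.cons y0 Y' : Fin (n+2) → Blk d w) i))]
      simp only [Fin.cons_zero, Fin.cons_succ, Fin.castSucc_zero, ← Fin.succ_castSucc,
        Fin.val_succ, Fin.val_zero]
      ring
    rw [show (∑ x : Blk d w, bigF (Fin.cons (x, Y').1 (x, Y').2))
        = ∑ y0 : Blk d w, bigF (Fin.cons y0 Y' : Fin (n+2) → Blk d w) from rfl,
      Finset.sum_congr rfl fun y0 _ => hterm y0, ← Finset.sum_mul]
    ring

/-! ### Spectral push lemmas -/

def gammaQ (d w : ℕ) (ρ : ℝ) : ℝ :=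
  ∑ y : Blk d w, leafW d w ρ y * rootPostMean d w ρ y ^ 2 * blockSum d w y ^ 2

lemma sum_pmm_blockSum :
    ∑ y : Blk d w, leafW d w ρ y * rootPostMean d w ρ y ^ 2 * blockSum d w y = 0 := by
  refine sum_eq_zero_of_flipB_neg fun y => ?_
  show leafW d w ρ (flipB y) * rootPostMean d w ρ (flipB y) ^ 2 * blockSum d w (flipB y) = _
  rw [leafW_flipB, postMean_flipB, blockSum_flipB]
  ring

lemma push_uv (hd : 2 ≤ d) (hm : 1 ≤ m) (hρ : ρ ∈ Set.Icc (-1 : ℝ) 1)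
    (u v : ℝ) (φ : Blk d w → ℝ) (y' : Blk d w) :
    (∑ x : Blk d w, (u * leafW d w ρ x + v * gnum d w ρ x) * φ x * arStep d w m ρ x y')
    = (u * (∑ x : Blk d w, leafW d w ρ x * φ x)
        + v * (∑ x : Blk d w, gnum d w ρ x * φ x)) * leafW d w ρ y'
      + alphaAR d m ρ *
        (u * (∑ x : Blk d w, gnum d w ρ x * φ x)
          + v * (∑ x : Blk d w, leafW d w ρ x * rootPostMean d w ρ x ^ 2 * φ x))
          * gnum d w ρ y' := by
  have hF : ∀ x : Blk d w,
      (u * leafW d w ρ x + v * gnum d w ρ x) * φ x * arStep d w m ρ x y'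
      = (u * (leafW d w ρ x * φ x) + v * (gnum d w ρ x * φ x)) * leafW d w ρ y'
        + (alphaAR d m ρ * (u * (gnum d w ρ x * φ x)
            + v * (leafW d w ρ x * rootPostMean d w ρ x ^ 2 * φ x))) * gnum d w ρ y' := by
    intro x
    have hg : leafW d w ρ x * rootPostMean d w ρ x = gnum d w ρ x := leafW_mul_postMean hρ x
    have hk := key_step (w := w) hd hm hρ x y'
    calc (u * leafW d w ρ x + v * gnum d w ρ x) * φ x * arStep d w m ρ x y'
        = (u * φ x + v * (rootPostMean d w ρ x * φ x)) *
            (leafW d w ρ x * arStep d w m ρ x y') := by rw [← hg]; ring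
      _ = (u * φ x + v * (rootPostMean d w ρ x * φ x)) *
            (leafW d w ρ x * leafW d w ρ y'
              + alphaAR d m ρ * gnum d w ρ x * gnum d w ρ y') := by rw [hk]
      _ = _ := by rw [← hg]; ring
  rw [Finset.sum_congr rfl fun x _ => hF x, Finset.sum_add_distrib,
    ← Finset.sum_mul, ← Finset.sum_mul]
  have hA : ∑ x : Blk d w, (u * (leafW d w ρ x * φ x) + v * (gnum d w ρ x * φ x))
      = u * (∑ x : Blk d w, leafW d w ρ x * φ x)
        + v * (∑ x : Blk d w, gnum d w ρ x * φ x) := by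
    rw [Finset.sum_add_distrib, ← Finset.mul_sum, ← Finset.mul_sum]
  have hB : ∑ x : Blk d w, (alphaAR d m ρ * (u * (gnum d w ρ x * φ x)
        + v * (leafW d w ρ x * rootPostMean d w ρ x ^ 2 * φ x)))
      = alphaAR d m ρ * (u * (∑ x : Blk d w, gnum d w ρ x * φ x)
          + v * (∑ x : Blk d w, leafW d w ρ x * rootPostMean d w ρ x ^ 2 * φ x)) := by
    rw [← Finset.mul_sum, Finset.sum_add_distrib, ← Finset.mul_sum, ← Finset.mul_sum]
  rw [hA, hB]

section push
variable (hd : 2 ≤ d) (hm : 1 ≤ m) (hρ : ρ ∈ Set.Icc (-1 : ℝ) 1)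
include hd hm hρ

lemma push_one (u v : ℝ) (y' : Blk d w) :
    (∑ x : Blk d w, (u * leafW d w ρ x + v * gnum d w ρ x) * (1 : ℝ) * arStep d w m ρ x y')
    = u * leafW d w ρ y' + (alphaAR d m ρ * v * qIsing d w ρ) * gnum d w ρ y' := by
  have h := push_uv hd hm hρ u v (fun _ => (1 : ℝ)) y'
  simp only [mul_one] at h ⊢
  rw [h, sum_leafW, sum_gnum]
  have hq : (∑ x : Blk d w, leafW d w ρ x * rootPostMean d w ρ x ^ 2) = qIsing d w ρ := rfl
  rw [hq]
  ring

lemma push_Z (u v : ℝ) (y' : Blk d w) :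
    (∑ x : Blk d w, (u * leafW d w ρ x + v * gnum d w ρ x) * blockSum d w x *
        arStep d w m ρ x y')
    = (v * ((d : ℝ) * ρ) ^ w) * leafW d w ρ y'
      + (alphaAR d m ρ * u * ((d : ℝ) * ρ) ^ w) * gnum d w ρ y' := by
  have h := push_uv hd hm hρ u v (blockSum d w) y'
  rw [h, sum_leafW_blockSum, sum_gnum_blockSum, sum_pmm_blockSum]
  ring

lemma push_Zsq (u v : ℝ) (y' : Blk d w) :
    (∑ x : Blk d w, (u * leafW d w ρ x + v * gnum d w ρ x) * blockSum d w x ^ 2 *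
        arStep d w m ρ x y')
    = (u * isingMoment d w ρ 2) * leafW d w ρ y'
      + (alphaAR d m ρ * v * gammaQ d w ρ) * gnum d w ρ y' := by
  have h := push_uv hd hm hρ u v (fun x => blockSum d w x ^ 2) y'
  rw [h, sum_leafW_blockSum_sq, sum_gnum_blockSum_sq]
  have hγ : (∑ x : Blk d w, leafW d w ρ x * rootPostMean d w ρ x ^ 2 * blockSum d w x ^ 2)
      = gammaQ d w ρ := rfl
  rw [hγ]
  ring

omit hd hm hρ in
lemma final_one (u v : ℝ) :
    (∑ y : Blk d w, (u * leafW d w ρ y + v * gnum d w ρ y) * (1 : ℝ)) = u := by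
  simp only [mul_one]
  rw [Finset.sum_add_distrib, ← Finset.mul_sum, ← Finset.mul_sum, sum_leafW, sum_gnum]
  ring

omit hd hm hρ in
lemma final_Z (u v : ℝ) :
    (∑ y : Blk d w, (u * leafW d w ρ y + v * gnum d w ρ y) * blockSum d w y)
      = v * ((d : ℝ) * ρ) ^ w := by
  have : ∀ y : Blk d w, (u * leafW d w ρ y + v * gnum d w ρ y) * blockSum d w y
      = u * (leafW d w ρ y * blockSum d w y) + v * (gnum d w ρ y * blockSum d w y) := by
    intro y; ring
  rw [Finset.sum_congr rfl fun y _ => this y, Finset.sum_add_distrib,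
    ← Finset.mul_sum, ← Finset.mul_sum, sum_leafW_blockSum, sum_gnum_blockSum]
  ring

end push

/-! ### Evaluation of the transfer recursion -/

lemma transIter_congr {n : ℕ} {μ1 μ2 : Blk d w → ℝ} {φ1 φ2 : ℕ → Blk d w → ℝ}
    (hμ : ∀ y, μ1 y = μ2 y) (hφ : ∀ i y, φ1 i y = φ2 i y) :
    transIter d w m ρ n μ1 φ1 = transIter d w m ρ n μ2 φ2 := by
  rw [show μ1 = μ2 from funext hμ, show φ1 = φ2 from funext fun i => funext (hφ i)]

section evals
variable (hd : 2 ≤ d) (hm : 1 ≤ m) (hρ : ρ ∈ Set.Icc (-1 : ℝ) 1)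
include hd hm hρ

lemma evalA : ∀ (n : ℕ) (u v : ℝ),
    transIter d w m ρ n (fun y => u * leafW d w ρ y + v * gnum d w ρ y) (fun _ _ => (1 : ℝ))
      = u := by
  intro n
  induction n with
  | zero => intro u v; exact final_one u v
  | succ n ih =>
    intro u v
    rw [transIter]
    refine (transIter_congr ?_ ?_).trans
      (ih u (alphaAR d m ρ * v * qIsing d w ρ))
    · intro y'; exact push_one hd hm hρ u v y'
    · intro i y; rfl

lemma evalC : ∀ (c n : ℕ), c ≤ n → ∀ u v : ℝ,
    transIter d w m ρ n (fun y => u * leafW d w ρ y + v * gnum d w ρ y)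
        (fun i y => if i = c then blockSum d w y else 1)
      = v * (alphaAR d m ρ * qIsing d w ρ) ^ c * ((d : ℝ) * ρ) ^ w := by
  intro c
  induction c with
  | zero =>
    intro n hn u v
    have hgoal : transIter d w m ρ n (fun y => u * leafW d w ρ y + v * gnum d w ρ y)
        (fun i y => if i = 0 then blockSum d w y else 1) = v * ((d : ℝ) * ρ) ^ w := by
      cases n with
      | zero => exact final_Z u v
      | succ n' =>
        rw [transIter]
        refine (transIter_congr ?_ ?_).trans
          (evalA hd hm hρ n' (v * ((d : ℝ) * ρ) ^ w)
            (alphaAR d m ρ * u * ((d : ℝ) * ρ) ^ w))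
        · intro y'; exact push_Z hd hm hρ u v y'
        · intro i y; exact if_neg (Nat.succ_ne_zero i)
    rw [hgoal, pow_zero]
    ring
  | succ c ih =>
    intro n hn u v
    cases n with
    | zero => omega
    | succ n' =>
      rw [transIter]
      have h2 : ∀ (i : ℕ) (y : Blk d w),
          (if i + 1 = c + 1 then blockSum d w y else (1:ℝ))
            = if i = c then blockSum d w y else 1 := by
        intro i y
        by_cases hic : i = c
        · rw [if_pos hic, if_pos (by omega)]
        · rw [if_neg hic, if_neg (by omega)]
      refine ((transIter_congr ?_ ?_).trans
        (ih n' (by omega) u (alphaAR d m ρ * v * qIsing d w ρ))).trans ?_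
      · intro y'; exact push_one hd hm hρ u v y'
      · intro i y; exact h2 i y
      · rw [pow_succ]; ring

lemma evalD : ∀ (b c n : ℕ), b < c → c ≤ n → ∀ u v : ℝ,
    transIter d w m ρ n (fun y => u * leafW d w ρ y + v * gnum d w ρ y)
        (fun i y => if i = b then blockSum d w y ^ 2
          else if i = c then blockSum d w y else 1)
      = v * alphaAR d m ρ * gammaQ d w ρ *
          (alphaAR d m ρ * qIsing d w ρ) ^ (c - 1) * ((d : ℝ) * ρ) ^ w := by
  intro b
  induction b with
  | zero =>
    intro c n hbc hcn u v
    obtain ⟨c', rfl⟩ : ∃ c', c = c' + 1 := ⟨c - 1, by omega⟩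
    obtain ⟨n', rfl⟩ : ∃ n', n = n' + 1 := ⟨n - 1, by omega⟩
    rw [transIter]
    have h2 : ∀ (i : ℕ) (y : Blk d w),
        (if i + 1 = 0 then blockSum d w y ^ 2
          else if i + 1 = c' + 1 then blockSum d w y else (1:ℝ))
        = if i = c' then blockSum d w y else 1 := by
      intro i y
      rw [if_neg (Nat.succ_ne_zero i)]
      by_cases hic : i = c'
      · rw [if_pos (by omega), if_pos hic]
      · rw [if_neg (by omega), if_neg hic]
    refine ((transIter_congr ?_ ?_).trans
      (evalC hd hm hρ c' n' (by omega) (u * isingMoment d w ρ 2)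
        (alphaAR d m ρ * v * gammaQ d w ρ))).trans ?_
    · intro y'; exact push_Zsq hd hm hρ u v y'
    · intro i y; exact h2 i y
    · rw [show c' + 1 - 1 = c' by omega]; ring
  | succ b ih =>
    intro c n hbc hcn u v
    obtain ⟨c', rfl⟩ : ∃ c', c = c' + 1 := ⟨c - 1, by omega⟩
    obtain ⟨n', rfl⟩ : ∃ n', n = n' + 1 := ⟨n - 1, by omega⟩
    rw [transIter]
    have h2 : ∀ (i : ℕ) (y : Blk d w),
        (if i + 1 = b + 1 then blockSum d w y ^ 2
          else if i + 1 = c' + 1 then blockSum d w y else (1:ℝ))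
        = if i = b then blockSum d w y ^ 2 else if i = c' then blockSum d w y else 1 := by
      intro i y
      by_cases hib : i = b
      · rw [if_pos (by omega), if_pos hib]
      · rw [if_neg (by omega), if_neg hib]
        by_cases hic : i = c'
        · rw [if_pos (by omega), if_pos hic]
        · rw [if_neg (by omega), if_neg hic]
    refine ((transIter_congr ?_ ?_).trans
      (ih c' n' (by omega) (by omega) u (alphaAR d m ρ * v * qIsing d w ρ))).trans ?_
    · intro y'; exact push_one hd hm hρ u v y'
    · intro i y; exact h2 i y
    · have hp : (alphaAR d m ρ * qIsing d w ρ) ^ c'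
          = (alphaAR d m ρ * qIsing d w ρ) * (alphaAR d m ρ * qIsing d w ρ) ^ (c' - 1) := by
        rw [← pow_succ']
        congr 1
        omega
      rw [show c' + 1 - 1 = c' by omega, hp]
      ring

lemma evalE : ∀ (a b c n : ℕ), a < b → b < c → c ≤ n → ∀ u v : ℝ,
    transIter d w m ρ n (fun y => u * leafW d w ρ y + v * gnum d w ρ y)
        (fun i y => if i = a then blockSum d w y
          else if i = b then blockSum d w y ^ 2
          else if i = c then blockSum d w y else 1)
      = u * alphaAR d m ρ ^ 2 * (((d : ℝ) * ρ) ^ w) ^ 2 * gammaQ d w ρ *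
          (alphaAR d m ρ * qIsing d w ρ) ^ (c - a - 2) := by
  intro a
  induction a with
  | zero =>
    intro b c n hab hbc hcn u v
    obtain ⟨b', rfl⟩ : ∃ b', b = b' + 1 := ⟨b - 1, by omega⟩
    obtain ⟨c', rfl⟩ : ∃ c', c = c' + 1 := ⟨c - 1, by omega⟩
    obtain ⟨n', rfl⟩ : ∃ n', n = n' + 1 := ⟨n - 1, by omega⟩
    rw [transIter]
    have h2 : ∀ (i : ℕ) (y : Blk d w),
        (if i + 1 = 0 then blockSum d w y
          else if i + 1 = b' + 1 then blockSum d w y ^ 2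
          else if i + 1 = c' + 1 then blockSum d w y else (1:ℝ))
        = if i = b' then blockSum d w y ^ 2 else if i = c' then blockSum d w y else 1 := by
      intro i y
      rw [if_neg (Nat.succ_ne_zero i)]
      by_cases hib : i = b'
      · rw [if_pos (by omega), if_pos hib]
      · rw [if_neg (by omega), if_neg hib]
        by_cases hic : i = c'
        · rw [if_pos (by omega), if_pos hic]
        · rw [if_neg (by omega), if_neg hic]
    refine ((transIter_congr ?_ ?_).trans
      (evalD hd hm hρ b' c' n' (by omega) (by omega) (v * ((d : ℝ) * ρ) ^ w)
        (alphaAR d m ρ * u * ((d : ℝ) * ρ) ^ w))).trans ?_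
    · intro y'; exact push_Z hd hm hρ u v y'
    · intro i y; exact h2 i y
    · rw [show c' + 1 - 0 - 2 = c' - 1 by omega]
      ring
  | succ a ih =>
    intro b c n hab hbc hcn u v
    obtain ⟨b', rfl⟩ : ∃ b', b = b' + 1 := ⟨b - 1, by omega⟩
    obtain ⟨c', rfl⟩ : ∃ c', c = c' + 1 := ⟨c - 1, by omega⟩
    obtain ⟨n', rfl⟩ : ∃ n', n = n' + 1 := ⟨n - 1, by omega⟩
    rw [transIter]
    have h2 : ∀ (i : ℕ) (y : Blk d w),
        (if i + 1 = a + 1 then blockSum d w y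
          else if i + 1 = b' + 1 then blockSum d w y ^ 2
          else if i + 1 = c' + 1 then blockSum d w y else (1:ℝ))
        = if i = a then blockSum d w y
          else if i = b' then blockSum d w y ^ 2
          else if i = c' then blockSum d w y else 1 := by
      intro i y
      by_cases hia : i = a
      · rw [if_pos (by omega), if_pos hia]
      · rw [if_neg (by omega), if_neg hia]
        by_cases hib : i = b'
        · rw [if_pos (by omega), if_pos hib]
        · rw [if_neg (by omega), if_neg hib]
          by_cases hic : i = c'
          · rw [if_pos (by omega), if_pos hic]
          · rw [if_neg (by omega), if_neg hic]
    refine ((transIter_congr ?_ ?_).trans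
      (ih b' c' n' (by omega) (by omega) (by omega) u
        (alphaAR d m ρ * v * qIsing d w ρ))).trans ?_
    · intro y'; exact push_one hd hm hρ u v y'
    · intro i y; exact h2 i y
    · rw [show c' - a - 2 = c' + 1 - (a + 1) - 2 by omega]

end evals

/-! ### Final assembly -/

section final
variable (hd : 2 ≤ d) (hm : 1 ≤ m) (hρ : ρ ∈ Set.Icc (-1 : ℝ) 1)

lemma qIsing_nonneg (hρ : ρ ∈ Set.Icc (-1 : ℝ) 1) : 0 ≤ qIsing d w ρ :=
  Finset.sum_nonneg fun y _ => mul_nonneg (leafW_nonneg hρ y) (sq_nonneg _)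

lemma gammaQ_nonneg (hρ : ρ ∈ Set.Icc (-1 : ℝ) 1) : 0 ≤ gammaQ d w ρ :=
  Finset.sum_nonneg fun y _ =>
    mul_nonneg (mul_nonneg (leafW_nonneg hρ y) (sq_nonneg _)) (sq_nonneg _)

lemma gammaQ_le (hρ : ρ ∈ Set.Icc (-1 : ℝ) 1) : gammaQ d w ρ ≤ isingMoment d w ρ 2 := by
  rw [← sum_leafW_blockSum_sq]
  refine Finset.sum_le_sum fun y _ => ?_
  have h1 := postMean_sq_le_one hρ y
  have h2 := leafW_nonneg hρ y
  nlinarith [mul_nonneg (mul_nonneg h2 (sq_nonneg (blockSum d w y))) (sub_nonneg.mpr h1)]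

include hd hm hρ in
lemma arExp_eval (n : ℕ) (a b c : Fin n) (hab : a < b) (hbc : b < c) :
    arExp d w m n ρ
        (fun Y => blockSum d w (Y a) * blockSum d w (Y b) ^ 2 * blockSum d w (Y c))
      = alphaAR d m ρ ^ 2 * (((d : ℝ) * ρ) ^ w) ^ 2 * gammaQ d w ρ *
          (alphaAR d m ρ * qIsing d w ρ) ^ (c.val - a.val - 2) := by
  obtain ⟨N, rfl⟩ : ∃ N, n = N + 1 := ⟨n - 1, by have := c.isLt; omega⟩
  set φf : ℕ → Blk d w → ℝ := fun i y =>
    if i = a.val then blockSum d w y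
    else if i = b.val then blockSum d w y ^ 2
    else if i = c.val then blockSum d w y else 1 with hφf
  have hab' : a.val < b.val := hab
  have hbc' : b.val < c.val := hbc
  have hG : ∀ Y : Fin (N + 1) → Blk d w,
      (∏ i : Fin (N + 1), φf i.val (Y i))
        = blockSum d w (Y a) * blockSum d w (Y b) ^ 2 * blockSum d w (Y c) := by
    intro Y
    have hsub : ({a, b, c} : Finset (Fin (N + 1))) ⊆ Finset.univ := Finset.subset_univ _
    have hout : ∀ x ∈ Finset.univ, x ∉ ({a, b, c} : Finset (Fin (N + 1))) →
        φf x.val (Y x) = 1 := by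
      intro x _ hx
      simp only [Finset.mem_insert, Finset.mem_singleton, not_or] at hx
      obtain ⟨hxa, hxb, hxc⟩ := hx
      simp only [hφf]
      rw [if_neg (fun hc => hxa (Fin.ext hc)), if_neg (fun hc => hxb (Fin.ext hc)),
        if_neg (fun hc => hxc (Fin.ext hc))]
    rw [← Finset.prod_subset hsub hout]
    have hane : a ∉ ({b, c} : Finset (Fin (N + 1))) := by
      simp only [Finset.mem_insert, Finset.mem_singleton, not_or]
      exact ⟨Fin.ne_of_lt hab, Fin.ne_of_lt (lt_trans hab hbc)⟩
    have hbne : b ∉ ({c} : Finset (Fin (N + 1))) := by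
      simp only [Finset.mem_singleton]
      exact Fin.ne_of_lt hbc
    rw [show ({a, b, c} : Finset (Fin (N + 1))) = insert a {b, c} from rfl,
      Finset.prod_insert hane, Finset.prod_insert hbne, Finset.prod_singleton]
    have h1 : ¬(b.val = a.val) := by omega
    have h2 : ¬(c.val = a.val) := by omega
    have h3 : ¬(c.val = b.val) := by omega
    simp only [hφf, eq_self_iff_true, if_true, h1, h2, h3, if_false]
    ring
  calc arExp d w m (N + 1) ρ
        (fun Y => blockSum d w (Y a) * blockSum d w (Y b) ^ 2 * blockSum d w (Y c))
      = ∑ Y : Fin (N + 1) → Blk d w,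
          (leafW d w ρ (Y 0) *
              ∏ i : Fin N, arStep d w m ρ (Y i.castSucc) (Y i.succ)) *
            ∏ i : Fin (N + 1), φf i.val (Y i) := by
        rw [arExp]
        refine Finset.sum_congr rfl fun Y _ => ?_
        rw [hG Y]
        show arWeight d w m (N + 1) ρ Y * _ = _
        rw [arWeight, dif_pos (Nat.succ_pos N)]
        rfl
    _ = transIter d w m ρ N (leafW d w ρ) φf := chain_eq N (leafW d w ρ) φf
    _ = 1 * alphaAR d m ρ ^ 2 * (((d : ℝ) * ρ) ^ w) ^ 2 * gammaQ d w ρ *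
          (alphaAR d m ρ * qIsing d w ρ) ^ (c.val - a.val - 2) := by
        refine (transIter_congr
          (μ2 := fun y => 1 * leafW d w ρ y + 0 * gnum d w ρ y) (φ2 := φf)
          (fun y => by ring) (fun i y => rfl)).trans ?_
        exact evalE hd hm hρ a.val b.val c.val N hab' hbc' (by omega) 1 0
    _ = _ := by ring

end final

end S15

end

/-- In the autoregressive Ising broadcast process with context depth `w`
on `T(d,h)`, for `a < b < c` the block sums satisfy
`0 ≤ E[Z_a Z_b² Z_c] ≤ α² (α q_w)^{(c-b)+(b-a)-2} (dρ)^{2w} M_{d,ρ,w}(2)`. -/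
theorem statement15 (d h w : ℕ) (hd : 2 ≤ d) (hw : w ≤ h) (ρ : ℝ)
    (hρ : ρ ∈ Set.Icc (0 : ℝ) 1) :
    ∀ a b c : Fin (d ^ (h - w)), a < b → b < c →
      0 ≤ arExp d w (h - w) (d ^ (h - w)) ρ
          (fun Y => blockSum d w (Y a) * blockSum d w (Y b) ^ 2 * blockSum d w (Y c)) ∧
      arExp d w (h - w) (d ^ (h - w)) ρ
          (fun Y => blockSum d w (Y a) * blockSum d w (Y b) ^ 2 * blockSum d w (Y c)) ≤
        alphaAR d (h - w) ρ ^ 2 *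
          (alphaAR d (h - w) ρ * qIsing d w ρ) ^ ((c.val - b.val) + (b.val - a.val) - 2) *
          ((d : ℝ) * ρ) ^ (2 * w) * isingMoment d w ρ 2 := by
  intro a b c hab hbc
  have hρ' : ρ ∈ Set.Icc (-1 : ℝ) 1 := ⟨by linarith [hρ.1], hρ.2⟩
  have hab' : a.val < b.val := hab
  have hbc' : b.val < c.val := hbc
  have hm : 1 ≤ h - w := by
    by_contra hcon
    have h0 : h - w = 0 := by omega
    have hblt := b.isLt
    have h1 : d ^ (h - w) = 1 := by rw [h0, pow_zero]
    omega
  rw [S15.arExp_eval hd hm hρ' (d ^ (h - w)) a b c hab hbc]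
  have hexp : (c.val - b.val) + (b.val - a.val) - 2 = c.val - a.val - 2 := by omega
  have hβ : ((d : ℝ) * ρ) ^ (2 * w) = (((d : ℝ) * ρ) ^ w) ^ 2 := pow_mul' _ 2 w
  have hα := S15.alphaAR_nonneg (m := h - w) (ρ := ρ) hd
  have hq := S15.qIsing_nonneg (d := d) (w := w) hρ'
  have hγ := S15.gammaQ_nonneg (d := d) (w := w) hρ'
  have hγle := S15.gammaQ_le (d := d) (w := w) hρ'
  have hC : 0 ≤ alphaAR d (h - w) ρ ^ 2 * (((d : ℝ) * ρ) ^ w) ^ 2 *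
      (alphaAR d (h - w) ρ * qIsing d w ρ) ^ (c.val - a.val - 2) := by
    apply mul_nonneg (mul_nonneg (sq_nonneg _) (sq_nonneg _))
    exact pow_nonneg (mul_nonneg hα hq) _
  constructor
  · have := mul_nonneg hC hγ
    calc (0 : ℝ) ≤ (alphaAR d (h - w) ρ ^ 2 * (((d : ℝ) * ρ) ^ w) ^ 2 *
          (alphaAR d (h - w) ρ * qIsing d w ρ) ^ (c.val - a.val - 2)) * S15.gammaQ d w ρ := this
      _ = alphaAR d (h - w) ρ ^ 2 * (((d : ℝ) * ρ) ^ w) ^ 2 * S15.gammaQ d w ρ *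
          (alphaAR d (h - w) ρ * qIsing d w ρ) ^ (c.val - a.val - 2) := by ring
  · rw [hexp, hβ]
    calc alphaAR d (h - w) ρ ^ 2 * (((d : ℝ) * ρ) ^ w) ^ 2 * S15.gammaQ d w ρ *
          (alphaAR d (h - w) ρ * qIsing d w ρ) ^ (c.val - a.val - 2)
        = (alphaAR d (h - w) ρ ^ 2 * (((d : ℝ) * ρ) ^ w) ^ 2 *
            (alphaAR d (h - w) ρ * qIsing d w ρ) ^ (c.val - a.val - 2)) *
              S15.gammaQ d w ρ := by ring
      _ ≤ (alphaAR d (h - w) ρ ^ 2 * (((d : ℝ) * ρ) ^ w) ^ 2 *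
            (alphaAR d (h - w) ρ * qIsing d w ρ) ^ (c.val - a.val - 2)) *
              isingMoment d w ρ 2 := mul_le_mul_of_nonneg_left hγle hC
      _ = alphaAR d (h - w) ρ ^ 2 *
            (alphaAR d (h - w) ρ * qIsing d w ρ) ^ (c.val - a.val - 2) *
            (((d : ℝ) * ρ) ^ w) ^ 2 * isingMoment d w ρ 2 := by ring
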